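/- Let J ⊆ {1,...,n}, let t⁺_{jj'}, t⁻_{jj'} ∈ ℕ for j < j' in J, set T = ∑_{j<j'} t⁺_{jj'}, and for each multi-index K define the functions on the torus as usual. For any finite list of distinct monomials x^{K_1},...,x^{K_l}, the l×l matrix A with entries a_{jk} = (φ(x)x^{K_j}, ψ(x)x^{K_k}) — where φ(x) = ∏_{j<j'}(x_j−x_{j'})^{2t⁺}(x_j+x_{j'})^{2t⁻}, ψ(x) = ∏_{j<j'}(x_j x_{j'})^{t⁺+t⁻}, and (f,g) = ∑_K coe(x^K,f)conj(coe(x^K,g)) — satisfies: (−1)^T · y A y* > 0 for every nonzero y ∈ ℂ^l. In particular A is nonsingular. -/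

import Mathlib

open MvPolynomial ComplexConjugate

/-- `(f,g) = ∑_K coe(x^K,f) conj(coe(x^K,g))`. -/
noncomputable def pairW (n : ℕ) (f g : MvPolynomial (Fin n) ℂ) : ℂ :=
  ∑ᶠ K : Fin n →₀ ℕ, coeff K f * conj (coeff K g)


noncomputable section
namespace S19

variable (n : ℕ)

abbrev L (n : ℕ) := AddMonoidAlgebra ℂ (Fin n →₀ ℤ)

def embE : (Fin n →₀ ℕ) →+ (Fin n →₀ ℤ) :=
  Finsupp.mapRange.addMonoidHom (Nat.castAddMonoidHom ℤ)

lemma embE_inj : Function.Injective (embE n) :=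
  Finsupp.mapRange_injective _ (map_zero _) Nat.cast_injective

def iot : MvPolynomial (Fin n) ℂ →+* L n :=
  AddMonoidAlgebra.mapDomainRingHom ℂ (embE n)

lemma iot_apply (f : MvPolynomial (Fin n) ℂ) (K : Fin n →₀ ℕ) :
    (iot n f).coeff (embE n K) = MvPolynomial.coeff K f := by
  have : (iot n f).coeff = Finsupp.mapDomain (embE n) (AddMonoidAlgebra.coeff f) := rfl
  rw [this, Finsupp.mapDomain_apply (embE_inj n)]
  rfl

def gmon : Multiplicative (Fin n →₀ ℤ) →* L n where
  toFun a := AddMonoidAlgebra.single (-(Multiplicative.toAdd a)) 1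
  map_one' := by
    simp only [toAdd_one, neg_zero]; rfl
  map_mul' a b := by
    show AddMonoidAlgebra.single _ _ = _
    rw [AddMonoidAlgebra.single_mul_single, toAdd_mul, neg_add, one_mul, add_comm]

def sig : L n →+* L n :=
  AddMonoidAlgebra.liftNCRingHom (AddMonoidAlgebra.singleZeroRingHom.comp (starRingEnd ℂ))
    (gmon n) (fun _ _ => Commute.all _ _)

end S19

namespace S19
lemma sig_single (a : Fin n →₀ ℤ) (c : ℂ) :
    sig n (AddMonoidAlgebra.single a c) = AddMonoidAlgebra.single (-a) (conj c) := by
  show AddMonoidAlgebra.liftNC _ _ _ = _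
  rw [AddMonoidAlgebra.liftNC_single]
  show AddMonoidAlgebra.single 0 (conj c) * AddMonoidAlgebra.single (-a) 1 = _
  rw [AddMonoidAlgebra.single_mul_single, zero_add, mul_one]

lemma sig_eq (P : L n) :
    (sig n P).coeff = Finsupp.mapDomain Neg.neg (Finsupp.mapRange (starRingEnd ℂ) (map_zero _) P.coeff) := by
  induction P using AddMonoidAlgebra.induction with
  | zero => simp [map_zero]
  | single_add a c f ha hc ih =>
    rw [map_add, AddMonoidAlgebra.coeff_add, ih, sig_single, AddMonoidAlgebra.coeff_add]
    rw [Finsupp.mapRange_add (map_add _), Finsupp.mapDomain_add, AddMonoidAlgebra.coeff_single,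
      AddMonoidAlgebra.coeff_single, Finsupp.mapRange_single, Finsupp.mapDomain_single]

lemma sig_apply (P : L n) (b : Fin n →₀ ℤ) : (sig n P).coeff b = conj (P.coeff (-b)) := by
  rw [sig_eq, show b = -(-b) from (neg_neg b).symm,
    Finsupp.mapDomain_apply neg_injective, Finsupp.mapRange_apply, neg_neg]

end S19

namespace S19
lemma CT_mul_sig (P Q : L n) :
    (P * sig n Q).coeff 0 = ∑ a ∈ P.coeff.support, P.coeff a * conj (Q.coeff a) := by
  classical
  rw [AddMonoidAlgebra.coeff_mul]
  rw [Finsupp.sum]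
  apply Finset.sum_congr rfl
  intro a _
  have : ((sig n Q).coeff.sum fun a₂ b₂ => if a + a₂ = 0 then P.coeff a * b₂ else 0)
      = P.coeff a * (sig n Q).coeff (-a) := by
    rw [Finsupp.sum]
    rw [Finset.sum_eq_single (-a)]
    · simp
    · intro b _ hb
      rw [if_neg]
      intro h
      exact hb (by rw [eq_neg_iff_add_eq_zero, add_comm]; exact h)
    · intro h
      simp [Finsupp.notMem_support_iff.mp h]
  rw [this, sig_apply, neg_neg]
end S19

namespace S19
lemma pairW_eq_sum (f g : MvPolynomial (Fin n) ℂ) :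
    pairW n f g = ∑ K ∈ f.support, MvPolynomial.coeff K f * conj (MvPolynomial.coeff K g) := by
  apply finsum_eq_finset_sum_of_support_subset
  intro K hK
  simp only [Function.mem_support, ne_eq] at hK
  simp only [Finset.coe_sort_coe, MvPolynomial.mem_support_iff, Finset.mem_coe]
  intro h
  exact hK (by rw [h, zero_mul])

lemma iot_support (f : MvPolynomial (Fin n) ℂ) :
    (iot n f).coeff.support = f.support.map ⟨embE n, embE_inj n⟩ := by
  classical
  have h : (iot n f).coeff = Finsupp.mapDomain (embE n) (AddMonoidAlgebra.coeff f) := rfl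
  ext a
  rw [h, Finset.mem_map]
  constructor
  · intro ha'
    rcases Finset.mem_image.mp (Finsupp.mapDomain_support ha') with ⟨K, hK, rfl⟩
    exact ⟨K, hK, rfl⟩
  · rintro ⟨K, hK, rfl⟩
    rw [Finsupp.mem_support_iff]
    show Finsupp.mapDomain (embE n) (AddMonoidAlgebra.coeff f) (embE n K) ≠ 0
    rw [Finsupp.mapDomain_apply (embE_inj n)]
    exact MvPolynomial.mem_support_iff.mp hK

lemma pairW_eq_CT (f g : MvPolynomial (Fin n) ℂ) :
    pairW n f g = (iot n f * sig n (iot n g)).coeff 0 := by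
  rw [CT_mul_sig, pairW_eq_sum, iot_support, Finset.sum_map]
  apply Finset.sum_congr rfl
  intro K _
  show _ = (iot n f).coeff (embE n K) * conj ((iot n g).coeff (embE n K))
  rw [iot_apply, iot_apply]
end S19

namespace S19
lemma key1 {R : Type*} [CommRing R] (a b a' b' : R) (ha : a*a'=1) (hb : b*b'=1) (t : ℕ) :
    (a-b)^(2*t) * (a'*b')^t = (-1)^t * ((a-b)^t * (a'-b')^t) := by
  have h1 : (a-b)^2 * (a'*b') = (-1) * ((a-b) * (a'-b')) := by
    linear_combination ((a-b)*b')*ha - ((a-b)*a')*hb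
  calc (a-b)^(2*t) * (a'*b')^t = ((a-b)^2 * (a'*b'))^t := by rw [pow_mul, ← mul_pow]
    _ = ((-1) * ((a-b) * (a'-b')))^t := by rw [h1]
    _ = (-1)^t * ((a-b)^t * (a'-b')^t) := by rw [mul_pow, mul_pow]

lemma key2 {R : Type*} [CommRing R] (a b a' b' : R) (ha : a*a'=1) (hb : b*b'=1) (t : ℕ) :
    (a+b)^(2*t) * (a'*b')^t = (a+b)^t * (a'+b')^t := by
  have h1 : (a+b)^2 * (a'*b') = (a+b) * (a'+b') := by
    linear_combination ((a+b)*b')*ha + ((a+b)*a')*hb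
  calc (a+b)^(2*t) * (a'*b')^t = ((a+b)^2 * (a'*b'))^t := by rw [pow_mul, ← mul_pow]
    _ = ((a+b) * (a'+b'))^t := by rw [h1]
    _ = (a+b)^t * (a'+b')^t := by rw [mul_pow]
end S19

namespace S19
variable (n : ℕ)
def XL (i : Fin n) : L n := AddMonoidAlgebra.single (Finsupp.single i 1) 1
def YL (i : Fin n) : L n := AddMonoidAlgebra.single (-(Finsupp.single i 1)) 1

lemma embE_single (i : Fin n) (m : ℕ) :
    embE n (Finsupp.single i m) = Finsupp.single i (m : ℤ) := by
  ext j
  simp [embE, Finsupp.single_apply, apply_ite]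
  split <;> simp_all

lemma iot_X (i : Fin n) : iot n (MvPolynomial.X i) = XL n i := by
  show AddMonoidAlgebra.mapDomain (embE n) (MvPolynomial.X i) = _
  have h : (MvPolynomial.X i : MvPolynomial (Fin n) ℂ)
      = AddMonoidAlgebra.single (Finsupp.single i 1) 1 := rfl
  rw [h, AddMonoidAlgebra.mapDomain_single, embE_single]
  rfl

lemma sig_XL (i : Fin n) : sig n (XL n i) = YL n i := by
  rw [XL, sig_single, YL, map_one]

lemma XL_mul_YL (i : Fin n) : XL n i * YL n i = 1 := by
  rw [XL, YL, AddMonoidAlgebra.single_mul_single, add_neg_cancel, mul_one]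
  rfl
end S19

namespace S19
variable (n : ℕ)

lemma factor_id (a b : Fin n) (s t : ℕ) :
    iot n ((MvPolynomial.X a - MvPolynomial.X b)^(2*s) * (MvPolynomial.X a + MvPolynomial.X b)^(2*t)) *
      sig n (iot n ((MvPolynomial.X a * MvPolynomial.X b)^(s+t)))
    = (-1)^s * (iot n ((MvPolynomial.X a - MvPolynomial.X b)^s * (MvPolynomial.X a + MvPolynomial.X b)^t) *
        sig n (iot n ((MvPolynomial.X a - MvPolynomial.X b)^s * (MvPolynomial.X a + MvPolynomial.X b)^t))) := by
  simp only [map_mul, map_pow, map_sub, map_add, iot_X, sig_XL]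
  set A := XL n a; set B := XL n b; set A' := YL n a; set B' := YL n b
  have ha : A * A' = 1 := XL_mul_YL n a
  have hb : B * B' = 1 := XL_mul_YL n b
  calc (A-B)^(2*s) * (A+B)^(2*t) * (A'*B')^(s+t)
      = ((A-B)^(2*s)*(A'*B')^s) * ((A+B)^(2*t)*(A'*B')^t) := by rw [pow_add]; ring
    _ = ((-1)^s * ((A-B)^s*(A'-B')^s)) * ((A+B)^t*(A'+B')^t) := by
        rw [key1 _ _ _ _ ha hb, key2 _ _ _ _ ha hb]
    _ = (-1)^s * ((A-B)^s * (A+B)^t * ((A'-B')^s * (A'+B')^t)) := by ring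

lemma global_id (S : Finset (Fin n × Fin n)) (tp tm : Fin n × Fin n → ℕ) :
    iot n (∏ p ∈ S, (MvPolynomial.X p.1 - MvPolynomial.X p.2)^(2*tp p) * (MvPolynomial.X p.1 + MvPolynomial.X p.2)^(2*tm p)) *
      sig n (iot n (∏ p ∈ S, (MvPolynomial.X p.1 * MvPolynomial.X p.2)^(tp p + tm p)))
    = (-1)^(∑ p ∈ S, tp p) *
      (iot n (∏ p ∈ S, (MvPolynomial.X p.1 - MvPolynomial.X p.2)^(tp p) * (MvPolynomial.X p.1 + MvPolynomial.X p.2)^(tm p)) *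
        sig n (iot n (∏ p ∈ S, (MvPolynomial.X p.1 - MvPolynomial.X p.2)^(tp p) * (MvPolynomial.X p.1 + MvPolynomial.X p.2)^(tm p)))) := by
  simp only [map_prod]
  rw [← Finset.prod_mul_distrib, ← Finset.prod_mul_distrib]
  calc (∏ p ∈ S, (iot n ((MvPolynomial.X p.1 - MvPolynomial.X p.2)^(2*tp p) * (MvPolynomial.X p.1 + MvPolynomial.X p.2)^(2*tm p)) *
          sig n (iot n ((MvPolynomial.X p.1 * MvPolynomial.X p.2)^(tp p + tm p)))))
      = ∏ p ∈ S, (-1)^(tp p) * (iot n ((MvPolynomial.X p.1 - MvPolynomial.X p.2)^(tp p) * (MvPolynomial.X p.1 + MvPolynomial.X p.2)^(tm p)) *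
          sig n (iot n ((MvPolynomial.X p.1 - MvPolynomial.X p.2)^(tp p) * (MvPolynomial.X p.1 + MvPolynomial.X p.2)^(tm p)))) :=
        Finset.prod_congr rfl fun p _ => factor_id n p.1 p.2 (tp p) (tm p)
    _ = (∏ p ∈ S, ((-1 : L n))^(tp p)) * ∏ p ∈ S, (iot n ((MvPolynomial.X p.1 - MvPolynomial.X p.2)^(tp p) * (MvPolynomial.X p.1 + MvPolynomial.X p.2)^(tm p)) *
          sig n (iot n ((MvPolynomial.X p.1 - MvPolynomial.X p.2)^(tp p) * (MvPolynomial.X p.1 + MvPolynomial.X p.2)^(tm p)))) := Finset.prod_mul_distrib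
    _ = _ := by rw [Finset.prod_pow_eq_pow_sum]
end S19

namespace S19
variable (n : ℕ)

lemma iot_C (c : ℂ) : iot n (MvPolynomial.C c) = AddMonoidAlgebra.single 0 c := by
  show AddMonoidAlgebra.mapDomain (embE n) (MvPolynomial.C c) = _
  have h : (MvPolynomial.C c : MvPolynomial (Fin n) ℂ) = AddMonoidAlgebra.single 0 c := rfl
  rw [h, AddMonoidAlgebra.mapDomain_single, map_zero]

lemma quad (l : ℕ) (φ ψ : MvPolynomial (Fin n) ℂ) (y : Fin l → ℂ) (Ks : Fin l → (Fin n →₀ ℕ)) :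
    ∑ j, ∑ k, y j * pairW n (φ * MvPolynomial.monomial (Ks j) 1) (ψ * MvPolynomial.monomial (Ks k) 1) * conj (y k)
    = pairW n (φ * ∑ j, MvPolynomial.C (y j) * MvPolynomial.monomial (Ks j) 1)
        (ψ * ∑ k, MvPolynomial.C (y k) * MvPolynomial.monomial (Ks k) 1) := by
  rw [pairW_eq_CT]
  simp only [map_mul, map_sum]
  rw [Finset.mul_sum, Finset.mul_sum, Finset.sum_mul_sum]
  rw [AddMonoidAlgebra.coeff_sum, Finsupp.finset_sum_apply]
  apply Finset.sum_congr rfl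
  intro j _
  rw [AddMonoidAlgebra.coeff_sum, Finsupp.finset_sum_apply]
  apply Finset.sum_congr rfl
  intro k _
  rw [pairW_eq_CT, map_mul, map_mul, iot_C n (y j), iot_C n (y k), sig_single, neg_zero]
  have h3 : iot n φ * (AddMonoidAlgebra.single 0 (y j) * iot n (MvPolynomial.monomial (Ks j) 1)) *
      (sig n (iot n ψ) * (AddMonoidAlgebra.single 0 (conj (y k)) * sig n (iot n (MvPolynomial.monomial (Ks k) 1))))
      = AddMonoidAlgebra.single 0 (y j) * (AddMonoidAlgebra.single 0 (conj (y k)) *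
          (iot n φ * iot n (MvPolynomial.monomial (Ks j) 1) *
            (sig n (iot n ψ) * sig n (iot n (MvPolynomial.monomial (Ks k) 1))))) := by ring
  rw [h3, AddMonoidAlgebra.coeff_single_zero_mul, AddMonoidAlgebra.coeff_single_zero_mul,
    map_mul]
  ring
end S19

namespace S19
variable (n : ℕ)

lemma pairW_self (g : MvPolynomial (Fin n) ℂ) (hg : g ≠ 0) :
    0 < (pairW n g g).re ∧ (pairW n g g).im = 0 := by
  rw [pairW_eq_sum]
  have h : ∀ K : Fin n →₀ ℕ, MvPolynomial.coeff K g * conj (MvPolynomial.coeff K g)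
      = (Complex.normSq (MvPolynomial.coeff K g) : ℂ) := by
    intro K; rw [mul_comm, Complex.normSq_eq_conj_mul_self]
  simp only [h]
  rw [← Complex.ofReal_sum]
  constructor
  · rw [Complex.ofReal_re]
    obtain ⟨K0, hK0⟩ := (MvPolynomial.ne_zero_iff.mp hg)
    apply Finset.sum_pos'
    · intro K _; exact Complex.normSq_nonneg _
    · exact ⟨K0, MvPolynomial.mem_support_iff.mpr hK0, Complex.normSq_pos.mpr hK0⟩
  · rw [Complex.ofReal_im]

lemma U_ne_zero (S : Finset (Fin n × Fin n)) (hS : ∀ p ∈ S, p.1 ≠ p.2) (tp tm : Fin n × Fin n → ℕ) :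
    (∏ p ∈ S, (MvPolynomial.X p.1 - MvPolynomial.X p.2)^(tp p) * (MvPolynomial.X p.1 + MvPolynomial.X p.2)^(tm p)
      : MvPolynomial (Fin n) ℂ) ≠ 0 := by
  rw [Finset.prod_ne_zero_iff]
  intro p hp
  have h1 : (MvPolynomial.X p.1 - MvPolynomial.X p.2 : MvPolynomial (Fin n) ℂ) ≠ 0 := by
    intro h
    have := congrArg (MvPolynomial.coeff (Finsupp.single p.1 1)) h
    rw [MvPolynomial.coeff_sub, MvPolynomial.coeff_zero, MvPolynomial.coeff_X,
      MvPolynomial.coeff_X', if_neg (fun hc => hS p hp (Finsupp.single_left_injective one_ne_zero hc).symm)] at this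
    simp at this
  have h2 : (MvPolynomial.X p.1 + MvPolynomial.X p.2 : MvPolynomial (Fin n) ℂ) ≠ 0 := by
    intro h
    have := congrArg (MvPolynomial.coeff (Finsupp.single p.1 1)) h
    rw [MvPolynomial.coeff_add, MvPolynomial.coeff_zero, MvPolynomial.coeff_X,
      MvPolynomial.coeff_X', if_neg (fun hc => hS p hp (Finsupp.single_left_injective one_ne_zero hc).symm)] at this
    simp at this
  exact mul_ne_zero (pow_ne_zero _ h1) (pow_ne_zero _ h2)

lemma F_ne_zero (l : ℕ) (Ks : Fin l → (Fin n →₀ ℕ)) (hKs : Function.Injective Ks)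
    (y : Fin l → ℂ) (hy : y ≠ 0) :
    (∑ j, MvPolynomial.C (y j) * MvPolynomial.monomial (Ks j) 1 : MvPolynomial (Fin n) ℂ) ≠ 0 := by
  obtain ⟨j0, hj0⟩ := Function.ne_iff.mp hy
  intro h
  have := congrArg (MvPolynomial.coeff (Ks j0)) h
  rw [MvPolynomial.coeff_zero, MvPolynomial.coeff_sum] at this
  simp only [MvPolynomial.C_mul_monomial, mul_one, MvPolynomial.coeff_monomial] at this
  rw [Finset.sum_eq_single j0] at this
  · rw [if_pos rfl] at this; exact hj0 this
  · intro b _ hb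
    rw [if_neg (fun hc => hb (hKs hc))]
  · intro hj; exact absurd (Finset.mem_univ j0) hj
end S19

namespace S19
variable (n : ℕ)

lemma neg_one_pow_L (T : ℕ) :
    ((-1 : L n))^T = AddMonoidAlgebra.single 0 ((-1:ℂ)^T) :=
  calc ((-1 : L n))^T = (AddMonoidAlgebra.singleZeroRingHom (-1 : ℂ))^T := by
        rw [map_neg, map_one]
    _ = AddMonoidAlgebra.singleZeroRingHom ((-1:ℂ)^T) := (map_pow _ _ _).symm
    _ = AddMonoidAlgebra.single 0 ((-1:ℂ)^T) := rfl

lemma main_id (S : Finset (Fin n × Fin n)) (tp tm : Fin n × Fin n → ℕ) (F : MvPolynomial (Fin n) ℂ) :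
    pairW n ((∏ p ∈ S, (MvPolynomial.X p.1 - MvPolynomial.X p.2)^(2*tp p) * (MvPolynomial.X p.1 + MvPolynomial.X p.2)^(2*tm p)) * F)
      ((∏ p ∈ S, (MvPolynomial.X p.1 * MvPolynomial.X p.2)^(tp p + tm p)) * F)
    = (-1:ℂ)^(∑ p ∈ S, tp p) *
      pairW n ((∏ p ∈ S, (MvPolynomial.X p.1 - MvPolynomial.X p.2)^(tp p) * (MvPolynomial.X p.1 + MvPolynomial.X p.2)^(tm p)) * F)
        ((∏ p ∈ S, (MvPolynomial.X p.1 - MvPolynomial.X p.2)^(tp p) * (MvPolynomial.X p.1 + MvPolynomial.X p.2)^(tm p)) * F) := by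
  rw [pairW_eq_CT, pairW_eq_CT]
  set Φ := iot n (∏ p ∈ S, (MvPolynomial.X p.1 - MvPolynomial.X p.2)^(2*tp p) * (MvPolynomial.X p.1 + MvPolynomial.X p.2)^(2*tm p)) with hΦ
  set Ψs := sig n (iot n (∏ p ∈ S, (MvPolynomial.X p.1 * MvPolynomial.X p.2)^(tp p + tm p))) with hΨ
  set U := iot n (∏ p ∈ S, (MvPolynomial.X p.1 - MvPolynomial.X p.2)^(tp p) * (MvPolynomial.X p.1 + MvPolynomial.X p.2)^(tm p)) with hU
  have key : Φ * Ψs = (-1 : L n)^(∑ p ∈ S, tp p) * (U * sig n U) := global_id n S tp tm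
  rw [map_mul, map_mul, map_mul, map_mul, map_mul]
  have h2 : Φ * iot n F * (Ψs * sig n (iot n F))
      = (Φ * Ψs) * (iot n F * sig n (iot n F)) := by ring
  rw [h2, key, neg_one_pow_L, mul_assoc, AddMonoidAlgebra.coeff_single_zero_mul]
  have h3 : U * sig n U * (iot n F * sig n (iot n F))
      = (U * iot n F) * (sig n U * sig n (iot n F)) := by ring
  rw [h3, hU]
end S19

end

theorem stmt19 (n l : ℕ) (J : Finset (Fin n)) (tp tm : Fin n × Fin n → ℕ)
    (Ks : Fin l → (Fin n →₀ ℕ)) (hKs : Function.Injective Ks)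
    (A : Matrix (Fin l) (Fin l) ℂ)
    (hA : ∀ j k, A j k =
      pairW n
        ((∏ p ∈ Finset.univ.filter
            (fun p : Fin n × Fin n => p.1 ∈ J ∧ p.2 ∈ J ∧ p.1 < p.2),
            (MvPolynomial.X p.1 - MvPolynomial.X p.2) ^ (2 * tp p) *
              (MvPolynomial.X p.1 + MvPolynomial.X p.2) ^ (2 * tm p)) *
          MvPolynomial.monomial (Ks j) 1)
        ((∏ p ∈ Finset.univ.filter
            (fun p : Fin n × Fin n => p.1 ∈ J ∧ p.2 ∈ J ∧ p.1 < p.2),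
            (MvPolynomial.X p.1 * MvPolynomial.X p.2) ^ (tp p + tm p)) *
          MvPolynomial.monomial (Ks k) 1)) :
    (∀ y : Fin l → ℂ, y ≠ 0 →
      0 < ((-1 : ℂ) ^ (∑ p ∈ Finset.univ.filter
              (fun p : Fin n × Fin n => p.1 ∈ J ∧ p.2 ∈ J ∧ p.1 < p.2), tp p) *
            ∑ j, ∑ k, y j * A j k * conj (y k)).re ∧
        ((-1 : ℂ) ^ (∑ p ∈ Finset.univ.filter
              (fun p : Fin n × Fin n => p.1 ∈ J ∧ p.2 ∈ J ∧ p.1 < p.2), tp p) *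
            ∑ j, ∑ k, y j * A j k * conj (y k)).im = 0) ∧
    A.det ≠ 0 := by
  classical
  set S := Finset.univ.filter
      (fun p : Fin n × Fin n => p.1 ∈ J ∧ p.2 ∈ J ∧ p.1 < p.2) with hSdef
  have hSne : ∀ p ∈ S, p.1 ≠ p.2 := by
    intro p hp
    rw [hSdef, Finset.mem_filter] at hp
    exact ne_of_lt hp.2.2.2
  have main : ∀ y : Fin l → ℂ, y ≠ 0 →
      0 < ((-1 : ℂ) ^ (∑ p ∈ S, tp p) *
            ∑ j, ∑ k, y j * A j k * conj (y k)).re ∧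
        ((-1 : ℂ) ^ (∑ p ∈ S, tp p) *
            ∑ j, ∑ k, y j * A j k * conj (y k)).im = 0 := by
    intro y hy
    have e1 : ∑ j, ∑ k, y j * A j k * conj (y k)
        = pairW n
          ((∏ p ∈ S, (MvPolynomial.X p.1 - MvPolynomial.X p.2) ^ (2 * tp p) *
              (MvPolynomial.X p.1 + MvPolynomial.X p.2) ^ (2 * tm p)) *
            ∑ j, MvPolynomial.C (y j) * MvPolynomial.monomial (Ks j) 1)
          ((∏ p ∈ S, (MvPolynomial.X p.1 * MvPolynomial.X p.2) ^ (tp p + tm p)) *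
            ∑ k, MvPolynomial.C (y k) * MvPolynomial.monomial (Ks k) 1) := by
      simp only [hA]
      exact S19.quad n l _ _ y Ks
    rw [e1, S19.main_id n S tp tm (∑ j, MvPolynomial.C (y j) * MvPolynomial.monomial (Ks j) 1)]
    have hsq : (-1:ℂ) ^ (∑ p ∈ S, tp p) * (-1:ℂ) ^ (∑ p ∈ S, tp p) = 1 := by
      rw [← mul_pow]; norm_num
    rw [← mul_assoc, hsq, one_mul]
    exact S19.pairW_self n _
      (mul_ne_zero (S19.U_ne_zero n S hSne tp tm) (S19.F_ne_zero n l Ks hKs y hy))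
  refine ⟨main, ?_⟩
  intro hdet
  obtain ⟨v, hv0, hv⟩ := Matrix.exists_vecMul_eq_zero_iff.mpr hdet
  have h0 : ∑ j, ∑ k, v j * A j k * conj (v k) = 0 := by
    rw [Finset.sum_comm]
    calc ∑ k, ∑ j, v j * A j k * conj (v k)
        = ∑ k, (∑ j, v j * A j k) * conj (v k) := by
          refine Finset.sum_congr rfl fun k _ => ?_
          rw [Finset.sum_mul]
      _ = 0 := by
          refine Finset.sum_eq_zero fun k _ => ?_
          have hk : Matrix.vecMul v A k = 0 := congrFun hv k
          simp only [Matrix.vecMul, dotProduct] at hk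
          rw [hk, zero_mul]
  have hpos := (main v hv0).1
  rw [h0, mul_zero] at hpos
  simp at hpos
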